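/- Let n ≥ 1 and let N = 2^n + 1 or N = 2^n + 3. If A is an n-element set of positive integers that is sumset-distinct modulo N, then every element of A is coprime to N. -/

import Mathlib

/-- An `n`-element set `A` of positive integers is *sumset-distinct modulo `N`*
if all subset sums (including the empty sum) are pairwise distinct modulo `N`. -/
def SumsetDistinctMod (N : ℕ) (A : Finset ℕ) : Prop :=
  ∀ B ⊆ A, ∀ C ⊆ A, (∑ x ∈ B, x) % N = (∑ x ∈ C, x) % N → B = C

/-- The count of numbers below `N` in a fixed residue class mod `p` (with `p ∣ N`). -/
lemma count_mod_class (N p r : ℕ) (hp : 0 < p) (hpN : p ∣ N) (hr : r < p) :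
    ((Finset.range N).filter (fun k => k % p = r)).card = N / p := by
  obtain ⟨m, rfl⟩ := hpN
  have himg : (Finset.range (p * m)).filter (fun k => k % p = r)
      = (Finset.range m).image (fun j => p * j + r) := by
    ext k
    simp only [Finset.mem_filter, Finset.mem_range, Finset.mem_image]
    constructor
    · rintro ⟨hk, hmod⟩
      refine ⟨k / p, ?_, ?_⟩
      · exact (Nat.div_lt_iff_lt_mul hp).mpr (by rwa [Nat.mul_comm] at hk)
      · rw [← hmod]; exact (Nat.div_add_mod k p)
    · rintro ⟨j, hj, rfl⟩
      constructor
      · calc p * j + r < p * j + p := by omega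
          _ = p * (j + 1) := by ring
          _ ≤ p * m := Nat.mul_le_mul_left p hj
      · simp [Nat.mul_add_mod, Nat.mod_eq_of_lt hr]
  rw [himg, Finset.card_image_of_injective _ (fun x y h => Nat.eq_of_mul_eq_mul_left hp (by omega)),
    Finset.card_range, Nat.mul_div_cancel_left m hp]

theorem stmt11 (n : ℕ) (hn : 1 ≤ n) (N : ℕ) (hN : N = 2 ^ n + 1 ∨ N = 2 ^ n + 3)
    (A : Finset ℕ) (hpos : ∀ a ∈ A, 0 < a) (hcard : A.card = n)
    (hA : SumsetDistinctMod N A) : ∀ a ∈ A, Nat.Coprime a N := by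
  intro a ha
  by_contra hcop
  have h2n : 0 < 2 ^ n := Nat.pow_pos (by norm_num)
  have hNval : 2 ^ n + 1 ≤ N ∧ N ≤ 2 ^ n + 3 := by rcases hN with rfl | rfl <;> omega
  have hNpos : 0 < N := by omega
  have hNodd : Odd N := by
    have : Even (2 ^ n) := (Nat.even_pow).mpr ⟨even_two, by omega⟩
    rcases this with ⟨k, hk⟩
    rcases hN with rfl | rfl
    · exact ⟨k, by omega⟩
    · exact ⟨k + 1, by omega⟩
  set p := (Nat.gcd a N).minFac with hpdef
  have hp : p.Prime := Nat.minFac_prime hcop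
  have hpa : p ∣ a := (Nat.minFac_dvd _).trans (Nat.gcd_dvd_left _ _)
  have hpN : p ∣ N := (Nat.minFac_dvd _).trans (Nat.gcd_dvd_right _ _)
  have hppos : 0 < p := hp.pos
  -- the set of subset sums mod N
  set f : Finset ℕ → ℕ := fun B => (∑ x ∈ B, x) % N with hfdef
  set S : Finset ℕ := A.powerset.image f with hSdef
  have hinj : Set.InjOn f A.powerset := by
    intro B hB C hC h
    exact hA B (Finset.mem_powerset.mp hB) C (Finset.mem_powerset.mp hC) h
  have hScard : S.card = 2 ^ n := by
    rw [hSdef, Finset.card_image_of_injOn hinj, Finset.card_powerset, hcard]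
  have hSsub : S ⊆ Finset.range N := by
    intro s hs
    obtain ⟨B, _, rfl⟩ := Finset.mem_image.mp hs
    exact Finset.mem_range.mpr (Nat.mod_lt _ hNpos)
  have hfp : ∀ B : Finset ℕ, f B % p = (∑ x ∈ B, x) % p :=
    fun B => Nat.mod_mod_of_dvd _ hpN
  have hap : ∀ s : ℕ, (a + s) % p = s % p := by
    intro s
    obtain ⟨k, hk⟩ := hpa
    rw [hk, Nat.mul_add_mod]
  -- each residue class mod p contains an even number of elements of S
  have heven : ∀ r : ℕ, Even ((S.filter (fun s => s % p = r)).card) := by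
    intro r
    rw [hSdef, Finset.filter_image]
    set P : Finset (Finset ℕ) := A.powerset.filter (fun B => f B % p = r) with hPdef
    rw [Finset.card_image_of_injOn (hinj.mono (Finset.coe_subset.mpr (Finset.filter_subset _ _)))]
    -- split P by membership of a; `insert a` is a bijection between the halves
    have hPsplit : (P.filter (fun B => a ∈ B)).card + (P.filter (fun B => ¬ a ∈ B)).card
        = P.card := Finset.card_filter_add_card_filter_not _
    have hbij : (P.filter (fun B => ¬ a ∈ B)).card = (P.filter (fun B => a ∈ B)).card := by
      apply Finset.card_bij (fun B _ => insert a B)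
      · -- maps into
        intro B hB
        obtain ⟨hBP, hanot⟩ := Finset.mem_filter.mp hB
        obtain ⟨hBsub, hBr⟩ := Finset.mem_filter.mp hBP
        refine Finset.mem_filter.mpr ⟨Finset.mem_filter.mpr ⟨?_, ?_⟩, Finset.mem_insert_self a B⟩
        · exact Finset.mem_powerset.mpr
            (Finset.insert_subset ha (Finset.mem_powerset.mp hBsub))
        · rw [hfp, Finset.sum_insert hanot, hap, ← hfp, hBr]
      · -- injective
        intro B hB C hC h
        obtain ⟨_, hB2⟩ := Finset.mem_filter.mp hB
        obtain ⟨_, hC2⟩ := Finset.mem_filter.mp hC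
        calc B = (insert a B).erase a := (Finset.erase_insert hB2).symm
          _ = (insert a C).erase a := by rw [h]
          _ = C := Finset.erase_insert hC2
      · -- surjective
        intro B hB
        obtain ⟨hBP, hain⟩ := Finset.mem_filter.mp hB
        obtain ⟨hBsub, hBr⟩ := Finset.mem_filter.mp hBP
        refine ⟨B.erase a, Finset.mem_filter.mpr ⟨Finset.mem_filter.mpr ⟨?_, ?_⟩,
          Finset.notMem_erase a B⟩, Finset.insert_erase hain⟩
        · exact Finset.mem_powerset.mpr
            ((Finset.erase_subset a B).trans (Finset.mem_powerset.mp hBsub))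
        · rw [hfp, ← hBr, hfp, ← Finset.add_sum_erase _ _ hain, hap]
    have hPeven : Even P.card := ⟨(P.filter (fun B => a ∈ B)).card, by omega⟩
    exact hPeven
  -- the complement of S in range N
  set T : Finset ℕ := Finset.range N \ S with hTdef
  have hTcard : T.card = N - 2 ^ n := by
    rw [hTdef, Finset.card_sdiff_of_subset hSsub, Finset.card_range, hScard]
  -- T meets every residue class mod p
  have hTmeet : ∀ r : ℕ, r < p → ∃ t ∈ T, t % p = r := by
    intro r hr
    have hsubf : S.filter (fun s => s % p = r) ⊆
        (Finset.range N).filter (fun s => s % p = r) :=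
      Finset.filter_subset_filter _ hSsub
    have hTfilter : T.filter (fun s => s % p = r)
        = (Finset.range N).filter (fun s => s % p = r) \ S.filter (fun s => s % p = r) := by
      ext k
      simp only [hTdef, Finset.mem_filter, Finset.mem_sdiff]
      tauto
    have hcardT : (T.filter (fun s => s % p = r)).card
        = N / p - (S.filter (fun s => s % p = r)).card := by
      rw [hTfilter, Finset.card_sdiff_of_subset hsubf, count_mod_class N p r hppos hpN hr]
    have hNpodd : Odd (N / p) := by
      have : N = p * (N / p) := (Nat.mul_div_cancel' hpN).symm
      rw [this] at hNodd
      exact (Nat.odd_mul.mp hNodd).2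
    have hle : (S.filter (fun s => s % p = r)).card ≤ N / p := by
      have := Finset.card_le_card hsubf
      rwa [count_mod_class N p r hppos hpN hr] at this
    have hodd : Odd ((T.filter (fun s => s % p = r)).card) := by
      rw [hcardT]; exact Nat.Odd.sub_even hle hNpodd (heven r)
    have hne : (T.filter (fun s => s % p = r)).Nonempty := by
      rw [← Finset.card_pos]
      rcases hodd with ⟨k, hk⟩; omega
    obtain ⟨t, ht⟩ := hne
    exact ⟨t, (Finset.mem_filter.mp ht).1, (Finset.mem_filter.mp ht).2⟩
  -- hence p ≤ |T| = N - 2^n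
  have hple : p ≤ T.card := by
    have hsurj : Set.SurjOn (fun t => t % p) (T : Set ℕ) ((Finset.range p : Finset ℕ) : Set ℕ) := by
      intro r hr
      have hr' : r < p := Finset.mem_range.mp hr
      obtain ⟨t, htT, htr⟩ := hTmeet r hr'
      exact ⟨t, htT, htr⟩
    have := Finset.card_le_card_of_surjOn (fun t => t % p) hsurj
    rwa [Finset.card_range] at this
  rw [hTcard] at hple
  -- conclude
  have hp2 : 2 ≤ p := hp.two_le
  have hpne2 : p ≠ 2 := by
    intro h
    rw [h] at hpN
    rcases hNodd with ⟨k, hk⟩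
    omega
  rcases hN with rfl | rfl
  · omega
  · have hp3 : p = 3 := by omega
    rw [hp3] at hpN
    have h3 : (3 : ℕ) ∣ 2 ^ n := by omega
    have := (Nat.prime_three).dvd_of_dvd_pow h3
    omega
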